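/- Let G be a graph containing no degree-choosable component of radius at most r, where a degree-choosable component is a 2-connected induced subgraph that is neither a clique nor an odd cycle. Then for any vertex v, the breadth-first-search tree of depth r rooted at v is unique; in particular, every vertex at distance t ≤ r from v (with t ≥ 1) has exactly one neighbor at distance t−1 from v. -/

import Mathlib

open SimpleGraph

def IsOddCycle {V : Type*} (G : SimpleGraph V) : Prop :=
  G.Connected ∧ (∀ v, (G.neighborSet v).ncard = 2) ∧ Odd (Nat.card V)

def TwoConnected {V : Type*} (G : SimpleGraph V) : Prop :=
  3 ≤ Nat.card V ∧ ∀ v : V, (G.induce {w : V | w ≠ v}).Connected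

def DegreeChoosable {V : Type*} (G : SimpleGraph V) : Prop :=
  ∀ L : V → Finset ℕ, (∀ v, (G.neighborSet v).ncard ≤ (L v).card) →
    ∃ c : V → ℕ, (∀ v, c v ∈ L v) ∧ ∀ u w, G.Adj u w → c u ≠ c w

def IsDCC {V : Type*} (G : SimpleGraph V) (S : Set V) : Prop :=
  TwoConnected (G.induce S) ∧ G.induce S ≠ ⊤ ∧ ¬ IsOddCycle (G.induce S)

def RadiusLE {V : Type*} (G : SimpleGraph V) (S : Set V) (r : ℕ) : Prop :=
  ∃ u : S, ∀ w : S, (G.induce S).dist u w ≤ r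

def NoSmallDCC {V : Type*} (G : SimpleGraph V) (r : ℕ) : Prop :=
  ∀ S : Set V, IsDCC G S → ¬ RadiusLE G S r

def gball {V : Type*} (G : SimpleGraph V) (v : V) (r : ℕ) : Set V :=
  {u | G.Reachable v u ∧ G.dist v u ≤ r}

noncomputable def childCount {V : Type*} (G : SimpleGraph V) (v u : V) : ℕ :=
  {w | G.Adj u w ∧ G.dist v w = G.dist v u + 1}.ncard

private lemma dist_le_adj {V : Type*} {G : SimpleGraph V} {a b c : V}
    (hr : G.Reachable a b) (h : G.Adj b c) : G.dist a c ≤ G.dist a b + 1 := by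
  obtain ⟨p, hp⟩ := hr.exists_walk_length_eq_dist
  calc G.dist a c ≤ (p.concat h).length := SimpleGraph.dist_le _
    _ = G.dist a b + 1 := by rw [SimpleGraph.Walk.length_concat, hp]

private lemma parent_exists {V : Type*} {G : SimpleGraph V} {v u : V} (hd : G.dist v u ≠ 0) :
    ∃ w, G.Adj u w ∧ G.dist v w + 1 = G.dist v u := by
  have hr : G.Reachable v u := Reachable.of_dist_ne_zero hd
  obtain ⟨p, hp⟩ := hr.exists_walk_length_eq_dist
  cases hq : p.reverse with
  | nil => exact absurd (SimpleGraph.dist_self (G := G) (v := v)) hd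
  | cons hadj q =>
    rename_i w
    refine ⟨w, hadj, ?_⟩
    have h1 : G.dist v w ≤ G.dist v u - 1 := by
      have := SimpleGraph.dist_le q.reverse
      have hl : q.length = p.length - 1 := by
        have := congrArg SimpleGraph.Walk.length hq
        simp at this; omega
      simp [hl, hp] at this; omega
    have h2 : G.dist v u ≤ G.dist v w + 1 := by
      have hrw : G.Reachable v w := (q.reachable).symm
      exact dist_le_adj hrw hadj.symm
    omega

private lemma cyc_dcc {V : Type*} {G : SimpleGraph V} {n r : ℕ} (hn : 3 ≤ n)
    (f : ℕ → V)
    (hinj : ∀ i < n, ∀ j < n, f i = f j → i = j)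
    (hadj : ∀ i, i + 1 < n → G.Adj (f i) (f (i + 1)))
    (hwrap : G.Adj (f (n - 1)) (f 0))
    (heven : Even n)
    {a b : ℕ} (ha : a < n) (hb : b < n) (hnadj : ¬ G.Adj (f a) (f b)) (hab : a ≠ b)
    (hrad : ∀ j < n, min j (n - j) ≤ r) :
    IsDCC G (f '' Set.Iio n) ∧ RadiusLE G (f '' Set.Iio n) r := by
  have hn0 : 0 < n := by omega
  set S : Set V := f '' Set.Iio n with hS
  have hmem : ∀ i, i < n → f i ∈ S := fun i hi => ⟨i, hi, rfl⟩
  -- adjacency mod n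
  have madj : ∀ i, G.Adj (f (i % n)) (f ((i + 1) % n)) := by
    intro i
    have hmod : i % n < n := Nat.mod_lt i hn0
    have hstep : (i + 1) % n = (i % n + 1) % n := by
      conv_lhs => rw [← Nat.mod_add_mod]
    rcases Nat.lt_or_ge (i % n + 1) n with h1 | h1
    · rw [hstep, Nat.mod_eq_of_lt h1]
      exact hadj _ h1
    · have hin : i % n = n - 1 := by omega
      have hz : (i + 1) % n = 0 := by
        rw [hstep, hin, Nat.sub_add_cancel (by omega : 1 ≤ n), Nat.mod_self]
      rw [hz, hin]; exact hwrap
  -- cardinality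
  have hcard : Nat.card S = n := by
    have h1 : Set.InjOn f (Set.Iio n) := fun x hx y hy hxy => hinj x hx y hy hxy
    rw [Nat.card_coe_set_eq, hS, Set.ncard_image_of_injOn h1,
      ← Finset.coe_range, Set.ncard_coe_finset, Finset.card_range]
  -- forward reachability and distance bounds in the induced graph
  have key : ∀ d i, (h : i + d < n) →
      (G.induce S).Reachable ⟨f i, hmem i (by omega)⟩ ⟨f (i + d), hmem _ h⟩ ∧
      (G.induce S).dist ⟨f i, hmem i (by omega)⟩ ⟨f (i + d), hmem _ h⟩ ≤ d := by
    intro d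
    induction d with
    | zero => intro i h; exact ⟨Reachable.refl _, by simp⟩
    | succ d ih =>
      intro i hi
      obtain ⟨hr1, hd1⟩ := ih i (by omega)
      have hadj' : (G.induce S).Adj ⟨f (i + d), hmem _ (by omega)⟩
          ⟨f (i + d + 1), hmem _ (by omega)⟩ := by
        simp only [SimpleGraph.comap_adj, Function.Embedding.coe_subtype]
        exact hadj _ (by omega)
      exact ⟨hr1.trans hadj'.reachable,
        le_trans (dist_le_adj hr1 hadj') (by omega)⟩
  -- every vertex of S is f j for some j < n
  have hrep : ∀ x : S, ∃ j, ∃ hj : j < n, x = ⟨f j, hmem j hj⟩ := by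
    rintro ⟨x, hx⟩
    obtain ⟨j, hj, rfl⟩ := hx
    exact ⟨j, hj, rfl⟩
  -- reachability between any two vertices
  have hreach : ∀ x y : S, (G.induce S).Reachable x y := by
    intro x y
    obtain ⟨i, hi, rfl⟩ := hrep x
    obtain ⟨j, hj, rfl⟩ := hrep y
    have h1 := (key i 0 (by omega)).1
    have h2 := (key j 0 (by omega)).1
    simp only [Nat.zero_add] at h1 h2
    exact h1.symm.trans h2
  -- two-connectivity : deletion of any vertex keeps it connected
  have htwo : ∀ x0 : S, ((G.induce S).induce {w : S | w ≠ x0}).Connected := by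
    intro x0
    obtain ⟨k, hk, rfl⟩ := hrep x0
    set g : ℕ → V := fun i => f ((i + k + 1) % n) with hg
    have hgmem : ∀ i, g i ∈ S := fun i => hmem _ (Nat.mod_lt _ hn0)
    have hgadj : ∀ i, G.Adj (g i) (g (i + 1)) := by
      intro i
      have he : i + 1 + k + 1 = i + k + 1 + 1 := by omega
      show G.Adj (f ((i + k + 1) % n)) (f ((i + 1 + k + 1) % n))
      rw [he]; exact madj (i + k + 1)
    have hgne : ∀ i, i ≤ n - 2 → g i ≠ f k := by
      intro i hi hcon
      have hmod : (i + k + 1) % n = k :=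
        hinj _ (Nat.mod_lt _ hn0) k hk hcon
      have hdm := Nat.div_add_mod (i + k + 1) n
      rw [hmod] at hdm
      rcases Nat.eq_zero_or_pos ((i + k + 1) / n) with hq | hq
      · rw [hq] at hdm; omega
      · have : n ≤ n * ((i + k + 1) / n) := Nat.le_mul_of_pos_right n hq
        omega
    have hmem2 : ∀ i, i ≤ n - 2 → (⟨g i, hgmem i⟩ : S) ∈ {w : S | w ≠ ⟨f k, hmem k hk⟩} :=
      fun i hi hc => hgne i hi (congrArg Subtype.val hc)
    -- vertices of the deleted graph as elements
    have hreach2 : ∀ i, (hi : i ≤ n - 2) →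
        ((G.induce S).induce {w : S | w ≠ ⟨f k, hmem k hk⟩}).Reachable
          ⟨⟨g 0, hgmem 0⟩, hmem2 0 (by omega)⟩
          ⟨⟨g i, hgmem i⟩, hmem2 i hi⟩ := by
      intro i
      induction i with
      | zero => intro _; exact Reachable.refl _
      | succ i ih =>
        intro hi
        have h1 := ih (by omega)
        have hstepadj : ((G.induce S).induce {w : S | w ≠ ⟨f k, hmem k hk⟩}).Adj
            ⟨⟨g i, hgmem i⟩, hmem2 i (by omega)⟩
            ⟨⟨g (i + 1), hgmem (i + 1)⟩, hmem2 (i + 1) hi⟩ := by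
          simp only [SimpleGraph.comap_adj, Function.Embedding.coe_subtype]
          exact hgadj i
        exact h1.trans hstepadj.reachable
    rw [SimpleGraph.connected_iff]
    constructor
    · rintro x y
      obtain ⟨⟨xv, hxS⟩, hxne⟩ := x
      obtain ⟨⟨yv, hyS⟩, hyne⟩ := y
      obtain ⟨jx, hjx, hfx⟩ := hrep ⟨xv, hxS⟩
      obtain ⟨jy, hjy, hfy⟩ := hrep ⟨yv, hyS⟩
      -- find indices in g-form
      have hfind : ∀ j, (hj : j < n) → j ≠ k → ∃ i, i ≤ n - 2 ∧ g i = f j := by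
        intro j hj hjk
        rcases Nat.lt_or_ge k j with hlt | hge
        · exact ⟨j - k - 1, by omega, by
            show f ((j - k - 1 + k + 1) % n) = f j
            have he : j - k - 1 + k + 1 = j := by omega
            rw [he, Nat.mod_eq_of_lt hj]⟩
        · have hlt : j < k := by omega
          exact ⟨j + n - k - 1, by omega, by
            show f ((j + n - k - 1 + k + 1) % n) = f j
            have he : j + n - k - 1 + k + 1 = j + n := by omega
            rw [he, Nat.add_mod_right, Nat.mod_eq_of_lt hj]⟩
      have hxk : jx ≠ k := by
        intro hc; subst hc
        exact hxne (by rw [hfx])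
      have hyk : jy ≠ k := by
        intro hc; subst hc
        exact hyne (by rw [hfy])
      obtain ⟨ix, hix, hgx⟩ := hfind jx hjx hxk
      obtain ⟨iy, hiy, hgy⟩ := hfind jy hjy hyk
      have r1 := hreach2 ix hix
      have r2 := hreach2 iy hiy
      have hxeq : (⟨⟨xv, hxS⟩, hxne⟩ : {w : S | w ≠ ⟨f k, hmem k hk⟩}) =
          ⟨⟨g ix, hgmem ix⟩, hmem2 ix hix⟩ := by
        apply Subtype.ext; apply Subtype.ext
        simp [hgx]
        have := congrArg Subtype.val hfx
        simpa using this
      have hyeq : (⟨⟨yv, hyS⟩, hyne⟩ : {w : S | w ≠ ⟨f k, hmem k hk⟩}) =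
          ⟨⟨g iy, hgmem iy⟩, hmem2 iy hiy⟩ := by
        apply Subtype.ext; apply Subtype.ext
        simp [hgy]
        have := congrArg Subtype.val hfy
        simpa using this
      rw [hxeq, hyeq]
      exact r1.symm.trans r2
    · exact ⟨⟨⟨g 0, hgmem 0⟩, hmem2 0 (by omega)⟩⟩
  refine ⟨⟨⟨by rw [hcard]; exact hn, htwo⟩, ?_, ?_⟩, ?_⟩
  · -- not complete
    intro htop
    have hfab : f a ≠ f b := fun hc => hab (hinj a ha b hb hc)
    have : (G.induce S).Adj ⟨f a, hmem a ha⟩ ⟨f b, hmem b hb⟩ := by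
      rw [htop]
      exact fun hc => hfab (congrArg Subtype.val hc)
    exact hnadj (by simpa only [SimpleGraph.comap_adj, Function.Embedding.coe_subtype] using this)
  · -- not an odd cycle
    rintro ⟨_, _, hodd⟩
    rw [hcard] at hodd
    exact (Nat.not_odd_iff_even.mpr heven) hodd
  · -- radius
    refine ⟨⟨f 0, hmem 0 hn0⟩, ?_⟩
    intro w
    obtain ⟨j, hj, rfl⟩ := hrep w
    have hfwd : (G.induce S).dist ⟨f 0, hmem 0 hn0⟩ ⟨f j, hmem j hj⟩ ≤ j := by
      have := (key j 0 (by omega)).2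
      simpa using this
    have hbwd : (G.induce S).dist ⟨f 0, hmem 0 hn0⟩ ⟨f j, hmem j hj⟩ ≤ n - j := by
      obtain ⟨hr1, hd1⟩ := key (n - 1 - j) j (by omega)
      have heq : (⟨f (j + (n - 1 - j)), hmem _ (by omega)⟩ : S) = ⟨f (n - 1), hmem _ (by omega)⟩ :=
        Subtype.ext (congrArg f (by omega))
      rw [heq] at hr1 hd1
      have hwadj : (G.induce S).Adj ⟨f (n - 1), hmem _ (by omega)⟩ ⟨f 0, hmem 0 hn0⟩ := by
        simp only [SimpleGraph.comap_adj, Function.Embedding.coe_subtype]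
        exact hwrap
      have := dist_le_adj hr1 hwadj
      rw [SimpleGraph.dist_comm]
      omega
    have := hrad j hj
    rcases Nat.le_total j (n - j) with hle | hle
    · rw [Nat.min_eq_left hle] at this; omega
    · rw [Nat.min_eq_right hle] at this; omega

/-- Unique BFS tree: in a graph with no degree-choosable component of radius
at most r, every vertex at distance t ∈ [1,r] from v has exactly one neighbor
at distance t-1 from v. -/
theorem stmt3 {V : Type*} [Fintype V] (G : SimpleGraph V) (r : ℕ)
    (h : NoSmallDCC G r) (v u : V) (t : ℕ) (ht1 : 1 ≤ t) (htr : t ≤ r)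
    (hu : G.dist v u = t) :
    ∃! w : V, G.Adj u w ∧ G.dist v w = t - 1 := by
  classical
  have hdu : G.dist v u ≠ 0 := by omega
  have hru : G.Reachable v u := Reachable.of_dist_ne_zero hdu
  obtain ⟨w0, hw0adj, hw0d⟩ := parent_exists hdu
  refine ⟨w0, ⟨hw0adj, by omega⟩, ?_⟩
  rintro w1 ⟨hw1adj, hw1d⟩
  by_contra hne
  -- two distinct parents w1 w0 of u, both at distance t-1
  have hw0d' : G.dist v w0 = t - 1 := by omega
  have hw1d' : G.dist v w1 = t - 1 := by omega
  -- parent function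
  set par : V → V := fun y =>
    if hc : ∃ w, G.Adj y w ∧ G.dist v w + 1 = G.dist v y then hc.choose else y with hpar
  have par_spec : ∀ y, G.dist v y ≠ 0 →
      G.Adj y (par y) ∧ G.dist v (par y) + 1 = G.dist v y := by
    intro y hy
    have hex := parent_exists (G := G) (v := v) (u := y) hy
    rw [hpar]; simp only [dif_pos hex]
    exact hex.choose_spec
  have chain_reach : ∀ w, G.Reachable v w → ∀ k, G.Reachable v (par^[k] w) := by
    intro w hw k
    induction k with
    | zero => exact hw
    | succ k ih =>
      rw [Function.iterate_succ_apply']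
      rcases Nat.eq_zero_or_pos (G.dist v (par^[k] w)) with h0 | h0
      · show G.Reachable v (par (par^[k] w))
        by_cases hc : ∃ x, G.Adj (par^[k] w) x ∧ G.dist v x + 1 = G.dist v (par^[k] w)
        · rw [show par (par^[k] w) = hc.choose from dif_pos hc]
          exact ih.trans hc.choose_spec.1.reachable
        · rw [show par (par^[k] w) = par^[k] w from dif_neg hc]; exact ih
      · exact ih.trans (par_spec _ (by omega)).1.reachable
  have chain_dist : ∀ w, ∀ k, k ≤ G.dist v w →
      G.dist v (par^[k] w) = G.dist v w - k := by
    intro w k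
    induction k with
    | zero => intro _; simp
    | succ k ih =>
      intro hk
      have hik := ih (by omega)
      rw [Function.iterate_succ_apply']
      have := (par_spec (par^[k] w) (by omega)).2
      omega
  have chain_adj : ∀ w, ∀ k, k + 1 ≤ G.dist v w →
      G.Adj (par^[k] w) (par^[k + 1] w) := by
    intro w k hk
    rw [Function.iterate_succ_apply']
    exact (par_spec _ (by rw [chain_dist w k (by omega)]; omega)).1
  set c1 : ℕ → V := fun k => par^[k] w1 with hc1
  set c2 : ℕ → V := fun k => par^[k] w0 with hc2
  have hc1d : ∀ k, k ≤ t - 1 → G.dist v (c1 k) = t - 1 - k := by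
    intro k hk; rw [hc1]; rw [chain_dist w1 k (by omega), hw1d']
  have hc2d : ∀ k, k ≤ t - 1 → G.dist v (c2 k) = t - 1 - k := by
    intro k hk; rw [hc2]; rw [chain_dist w0 k (by omega), hw0d']
  have hc1adj : ∀ k, k + 1 ≤ t - 1 → G.Adj (c1 k) (c1 (k + 1)) := by
    intro k hk; exact chain_adj w1 k (by omega)
  have hc2adj : ∀ k, k + 1 ≤ t - 1 → G.Adj (c2 k) (c2 (k + 1)) := by
    intro k hk; exact chain_adj w0 k (by omega)
  have hc1r : ∀ k, G.Reachable v (c1 k) :=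
    chain_reach w1 (hru.trans hw1adj.reachable) 
  have hc2r : ∀ k, G.Reachable v (c2 k) :=
    chain_reach w0 (hru.trans hw0adj.reachable)
  -- both chains reach v at step t-1
  have hc1v : c1 (t - 1) = v := by
    have hd := hc1d (t - 1) le_rfl
    simp only [Nat.sub_self] at hd
    rcases SimpleGraph.dist_eq_zero_iff_eq_or_not_reachable.mp hd with he | hnr
    · exact he.symm
    · exact absurd (hc1r (t - 1)) hnr
  have hc2v : c2 (t - 1) = v := by
    have hd := hc2d (t - 1) le_rfl
    simp only [Nat.sub_self] at hd
    rcases SimpleGraph.dist_eq_zero_iff_eq_or_not_reachable.mp hd with he | hnr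
    · exact he.symm
    · exact absurd (hc2r (t - 1)) hnr
  -- first meeting point
  have hmeet : ∃ k, c1 k = c2 k := ⟨t - 1, by rw [hc1v, hc2v]⟩
  set K := Nat.find hmeet with hKdef
  have hK : c1 K = c2 K := Nat.find_spec hmeet
  have hKmin : ∀ j, j < K → c1 j ≠ c2 j := fun j hj => Nat.find_min hmeet hj
  have hK1 : 1 ≤ K := by
    rcases Nat.eq_zero_or_pos K with h0 | h0
    · exfalso; apply hne
      have := hK
      rw [h0] at this
      simpa [hc1, hc2] using this
    · exact h0
  have hKt : K ≤ t - 1 := Nat.find_le (by rw [hc1v, hc2v])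
  have ht2 : 2 ≤ t := by omega
  -- the cycle
  set n := 2 * K + 2 with hn
  set F : ℕ → V := fun i =>
    if i = 0 then u else if i ≤ K + 1 then c1 (i - 1) else c2 (2 * K + 1 - i) with hF
  have hF0 : F 0 = u := by simp [hF]
  have hFleft : ∀ i, 1 ≤ i → i ≤ K + 1 → F i = c1 (i - 1) := by
    intro i h1 h2; simp only [hF]
    rw [if_neg (by omega : ¬ i = 0), if_pos h2]
  have hFright : ∀ i, K + 2 ≤ i → F i = c2 (2 * K + 1 - i) := by
    intro i h1; simp only [hF]
    rw [if_neg (by omega : ¬ i = 0), if_neg (by omega : ¬ i ≤ K + 1)]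
  -- distances of cycle vertices
  have hFd0 : G.dist v (F 0) = t := by rw [hF0, hu]
  have hFdL : ∀ i, 1 ≤ i → i ≤ K + 1 → G.dist v (F i) = t - i := by
    intro i h1 h2
    rw [hFleft i h1 h2, hc1d (i - 1) (by omega)]
    omega
  have hFdR : ∀ i, K + 2 ≤ i → i ≤ 2 * K + 1 → G.dist v (F i) = t - (2 * K + 2 - i) := by
    intro i h1 h2
    rw [hFright i h1, hc2d (2 * K + 1 - i) (by omega)]
    omega
  -- injectivity
  have hFinj : ∀ i, i < n → ∀ j, j < n → F i = F j → i = j := by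
    intro i hi j hj hij
    have hd : G.dist v (F i) = G.dist v (F j) := by rw [hij]
    have hcls : ∀ m, m < n → m = 0 ∨ (1 ≤ m ∧ m ≤ K + 1) ∨ (K + 2 ≤ m ∧ m ≤ 2 * K + 1) := by
      intro m hm; omega
    rcases hcls i hi with hi0 | hiL | hiR <;> rcases hcls j hj with hj0 | hjL | hjR
    · omega
    · subst hi0; rw [hFd0, hFdL j hjL.1 hjL.2] at hd; omega
    · subst hi0; rw [hFd0, hFdR j hjR.1 hjR.2] at hd; omega
    · subst hj0; rw [hFd0, hFdL i hiL.1 hiL.2] at hd; omega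
    · rw [hFdL i hiL.1 hiL.2, hFdL j hjL.1 hjL.2] at hd; omega
    · -- i left, j right
      rw [hFdL i hiL.1 hiL.2, hFdR j hjR.1 hjR.2] at hd
      have hieq : i = 2 * K + 2 - j := by omega
      have hiK : i ≤ K := by omega
      exfalso
      apply hKmin (i - 1) (by omega)
      rw [hFleft i hiL.1 hiL.2, hFright j hjR.1] at hij
      have h2 : 2 * K + 1 - j = i - 1 := by omega
      rw [h2] at hij
      exact hij
    · subst hj0; rw [hFd0, hFdR i hiR.1 hiR.2] at hd; omega
    · -- i right, j left
      rw [hFdR i hiR.1 hiR.2, hFdL j hjL.1 hjL.2] at hd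
      have hieq : j = 2 * K + 2 - i := by omega
      have hjK : j ≤ K := by omega
      exfalso
      apply hKmin (j - 1) (by omega)
      rw [hFleft j hjL.1 hjL.2, hFright i hiR.1] at hij
      have h2 : 2 * K + 1 - i = j - 1 := by omega
      rw [h2] at hij
      exact hij.symm
    · rw [hFdR i hiR.1 hiR.2, hFdR j hjR.1 hjR.2] at hd; omega
  -- adjacency around the cycle
  have hFadj : ∀ i, i + 1 < n → G.Adj (F i) (F (i + 1)) := by
    intro i hi
    rcases Nat.eq_zero_or_pos i with h0 | h0
    · subst h0
      rw [hF0, hFleft 1 le_rfl (by omega)]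
      simpa [hc1] using hw1adj
    rcases le_or_gt (i + 1) (K + 1) with hl | hl
    · rw [hFleft i h0 (by omega), hFleft (i + 1) (by omega) hl]
      have := hc1adj (i - 1) (by omega)
      have he : i - 1 + 1 = i + 1 - 1 := by omega
      rwa [he] at this
    rcases Nat.lt_or_ge i (K + 2) with hmid | hright
    · -- i = K + 1 : c1 K = c2 K adjacent to c2 (K-1)
      have he : i = K + 1 := by omega
      subst he
      rw [hFleft (K + 1) (by omega) le_rfl, hFright (K + 2) le_rfl]
      have h1 : K + 1 - 1 = K := by omega
      have h2 : 2 * K + 1 - (K + 2) = K - 1 := by omega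
      rw [h1, h2, hK]
      have := hc2adj (K - 1) (by omega)
      have h3 : K - 1 + 1 = K := by omega
      rw [h3] at this
      exact this.symm
    · -- right arm
      rw [hFright i (by omega), hFright (i + 1) (by omega)]
      have := hc2adj (2 * K + 1 - (i + 1)) (by omega)
      have h3 : 2 * K + 1 - (i + 1) + 1 = 2 * K + 1 - i := by omega
      rw [h3] at this
      exact this.symm
  have hFwrap : G.Adj (F (n - 1)) (F 0) := by
    have h1 : n - 1 = 2 * K + 1 := by omega
    rw [h1, hFright (2 * K + 1) (by omega), hF0]
    have h2 : 2 * K + 1 - (2 * K + 1) = 0 := by omega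
    rw [h2]
    simpa [hc2] using hw0adj.symm
  -- the non-edge u -- m
  have hnadj : ¬ G.Adj (F 0) (F (K + 1)) := by
    intro hc
    rw [hF0, hFleft (K + 1) (by omega) le_rfl] at hc
    have h1 : K + 1 - 1 = K := by omega
    rw [h1] at hc
    have hdm : G.dist v (c1 K) = t - 1 - K := hc1d K hKt
    have := dist_le_adj (hc1r K) hc.symm
    omega
  have hrad : ∀ j, j < n → min j (n - j) ≤ r := by
    intro j hj
    have : K + 1 ≤ r := by omega
    rcases Nat.le_total j (n - j) with hle | hle
    · rw [Nat.min_eq_left hle]; omega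
    · rw [Nat.min_eq_right hle]; omega
  have := cyc_dcc (G := G) (n := n) (r := r) (by omega) F hFinj hFadj hFwrap
    (by rw [hn]; exact ⟨K + 1, by omega⟩)
    (by omega : (0:ℕ) < n) (by omega : K + 1 < n) hnadj (by omega)
    hrad
  exact h _ this.1 this.2
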